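/- The projection of a symmetric matrix S onto the cone of positive semidefinite matrices under the Frobenius norm is V Λ₊ Vᵀ, where S = V Λ Vᵀ is an eigendecomposition and Λ₊ replaces negative eigenvalues by zero: V Λ₊ Vᵀ = argmin_{P ⪰ 0} ‖P − S‖_F. -/

import Mathlib

open Matrix

/-- The projection of a symmetric matrix `S = V Λ Vᵀ` onto the PSD cone in the
Frobenius norm is `V Λ₊ Vᵀ`, where `Λ₊` replaces negative eigenvalues by zero:
`V Λ₊ Vᵀ` is PSD and minimizes the Frobenius distance to `S` among PSD matrices. -/
theorem stmt_15 {n : ℕ} (S V : Matrix (Fin n) (Fin n) ℝ) (μ : Fin n → ℝ)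
    (hV : Vᵀ * V = 1) (hS : S = V * Matrix.diagonal μ * Vᵀ)
    (P : Matrix (Fin n) (Fin n) ℝ)
    (hP : P = V * Matrix.diagonal (fun k => max (μ k) 0) * Vᵀ) :
    P.PosSemidef ∧
      ∀ Q : Matrix (Fin n) (Fin n) ℝ, Q.PosSemidef →
        ∑ a, ∑ b, (P a b - S a b) ^ 2 ≤ ∑ a, ∑ b, (Q a b - S a b) ^ 2 := by
  have hVV : V * Vᵀ = 1 := by rwa [mul_eq_one_comm] at hV
  have hVt : Vᴴ = Vᵀ := by
    ext i j; simp [Matrix.conjTranspose_apply]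
  -- Frobenius sum equals trace of Mᵀ * M
  have h1 : ∀ M : Matrix (Fin n) (Fin n) ℝ,
      ∑ a, ∑ b, (M a b) ^ 2 = Matrix.trace (Mᵀ * M) := by
    intro M
    simp only [Matrix.trace, Matrix.diag, Matrix.mul_apply, Matrix.transpose_apply]
    rw [Finset.sum_comm]
    simp [sq]
  -- conjugation by V preserves the Frobenius sum
  have key : ∀ A : Matrix (Fin n) (Fin n) ℝ,
      ∑ a, ∑ b, ((V * A * Vᵀ) a b) ^ 2 = ∑ a, ∑ b, (A a b) ^ 2 := by
    intro A
    rw [h1, h1]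
    have h2 : (V * A * Vᵀ)ᵀ * (V * A * Vᵀ) = V * (Aᵀ * A) * Vᵀ := by
      calc (V * A * Vᵀ)ᵀ * (V * A * Vᵀ)
          = V * (Aᵀ * ((Vᵀ * V) * (A * Vᵀ))) := by
            simp [Matrix.transpose_mul, Matrix.mul_assoc]
        _ = V * (Aᵀ * A) * Vᵀ := by simp [hV, Matrix.mul_assoc]
    rw [h2, Matrix.trace_mul_cycle, ← Matrix.mul_assoc, hV, Matrix.one_mul]
  -- diagonal matrices: Frobenius sum is sum of squares of diagonal
  have hdiag : ∀ f : Fin n → ℝ,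
      ∑ a, ∑ b, ((Matrix.diagonal f) a b) ^ 2 = ∑ a, (f a) ^ 2 := by
    intro f
    refine Finset.sum_congr rfl fun a _ => ?_
    rw [Finset.sum_eq_single a]
    · simp [Matrix.diagonal_apply_eq]
    · intro b _ hb; simp [Matrix.diagonal_apply_ne' _ hb]
    · simp
  have hPpsd : P.PosSemidef := by
    rw [hP, ← hVt]
    exact (Matrix.posSemidef_diagonal_iff.mpr fun k => le_max_right _ _).mul_mul_conjTranspose_same V
  refine ⟨hPpsd, fun Q hQ => ?_⟩
  set R := Vᵀ * Q * V with hR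
  have hRpsd : R.PosSemidef := by
    have hVth : Vᵀᴴ = V := by ext i j; simp [Matrix.conjTranspose_apply]
    have := hQ.mul_mul_conjTranspose_same Vᵀ
    rwa [hVth] at this
  have hRd : ∀ a, 0 ≤ R a a := fun a => by
    have h := hRpsd.dotProduct_mulVec_nonneg (Pi.single a 1)
    simpa [dotProduct, Matrix.mulVec, Pi.single_apply, Finset.sum_ite_eq,
      Finset.sum_ite_eq'] using h
  have hQeq : Q = V * R * Vᵀ := by
    rw [hR]
    calc Q = (V * Vᵀ) * Q * (V * Vᵀ) := by rw [hVV]; simp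
      _ = V * (Vᵀ * Q * V) * Vᵀ := by simp [Matrix.mul_assoc]
  -- rewrite both distances
  have hPS : ∀ a b, P a b - S a b
      = (V * Matrix.diagonal (fun k => max (μ k) 0 - μ k) * Vᵀ) a b := by
    intro a b
    rw [hP, hS]
    have : Matrix.diagonal (fun k => max (μ k) 0 - μ k)
        = Matrix.diagonal (fun k => max (μ k) 0) - Matrix.diagonal μ := by
      rw [Matrix.diagonal_sub]
    rw [this, Matrix.mul_sub, Matrix.sub_mul]
    simp [Matrix.sub_apply]
  have hQS : ∀ a b, Q a b - S a b = (V * (R - Matrix.diagonal μ) * Vᵀ) a b := by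
    intro a b
    rw [hQeq, hS, Matrix.mul_sub, Matrix.sub_mul]
    simp [Matrix.sub_apply]
  calc ∑ a, ∑ b, (P a b - S a b) ^ 2
      = ∑ a, (max (μ a) 0 - μ a) ^ 2 := by
        simp_rw [hPS]; rw [key, hdiag]
    _ ≤ ∑ a, (R a a - μ a) ^ 2 := by
        refine Finset.sum_le_sum fun a _ => ?_
        rcases le_total (μ a) 0 with h | h
        · rw [max_eq_right h]
          have := hRd a
          nlinarith
        · rw [max_eq_left h]; nlinarith [sq_nonneg (R a a - μ a)]
    _ ≤ ∑ a, ∑ b, ((R - Matrix.diagonal μ) a b) ^ 2 := by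
        refine Finset.sum_le_sum fun a _ => ?_
        have : (R a a - μ a) ^ 2 = ((R - Matrix.diagonal μ) a a) ^ 2 := by
          simp [Matrix.sub_apply]
        rw [this]
        exact Finset.single_le_sum (f := fun b => ((R - Matrix.diagonal μ) a b) ^ 2)
          (fun b _ => sq_nonneg _) (Finset.mem_univ a)
    _ = ∑ a, ∑ b, (Q a b - S a b) ^ 2 := by
        simp_rw [hQS]; rw [key]
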